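/- If u^{(l)} is an optimal list of length l and u^{(l+1)} is an optimal list of length l+1 (under the topic structure assumption, with distinct click-through rates within each topic), then whenever some item k of topic m lies in u^{(l)} but not in u^{(l+1)}, no item k' ≠ k of topic m can lie in u^{(l+1)} but not in u^{(l)}. (Fact 1 in the paper: between consecutive optimal lists, one cannot swap an item for another item of the same topic.) -/
import Mathlib

open Finset

private lemma tele (n : ℕ) (g : Fin n → ℝ) :
    ∑ i, g i * ∏ s ∈ Finset.Iio i, (1 - g s) = 1 - ∏ i, (1 - g i) := by
  induction n with
  | zero => simp
  | succ n ih =>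
    rw [Fin.sum_univ_castSucc, Fin.prod_univ_castSucc]
    have h1 : ∀ i : Fin n,
        ∏ s ∈ Finset.Iio (Fin.castSucc i), (1 - g s)
          = ∏ s ∈ Finset.Iio i, (1 - g (Fin.castSucc s)) := by
      intro i
      rw [Fin.Iio_castSucc, Finset.prod_map]
      rfl
    have h2 : ∏ s ∈ Finset.Iio (Fin.last n), (1 - g s)
        = ∏ i : Fin n, (1 - g (Fin.castSucc i)) := by
      rw [Fin.Iio_last_eq_map, Finset.prod_map]
      rfl
    simp only [h1, h2, ih (fun i => g (Fin.castSucc i))]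
    ring

private lemma swap_improves {M ι : Type*} [Fintype M] [Fintype ι]
    (φ : M → ℝ) (θ : ι → M → ℝ) (h : ι → M)
    (hθtopic : ∀ a m, m ≠ h a → θ a m = 0)
    (hφ : ∀ m, 0 < φ m) (hθ1 : ∀ a m, θ a m < 1)
    {n : ℕ} (u : Fin n → ι) (hinj : Function.Injective u)
    (a b : ι) (hhb : h b = h a) (hθab : θ b (h b) < θ a (h a))
    (i0 : Fin n) (hb : u i0 = b) (ha : ∀ i, u i ≠ a) :
    ¬ (∀ v : Fin n → ι, Function.Injective v →
      (∑ m, φ m * ∑ i, θ (v i) m * ∏ s ∈ Finset.Iio i, (1 - θ (v s) m))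
        ≤ ∑ m, φ m * ∑ i, θ (u i) m * ∏ s ∈ Finset.Iio i, (1 - θ (u s) m)) := by
  intro hopt
  set v : Fin n → ι := fun i => if i = i0 then a else u i with hv
  have hvinj : Function.Injective v := by
    intro i j hij
    simp only [hv] at hij
    by_cases hi : i = i0 <;> by_cases hj : j = i0 <;>
      simp [hi, hj] at hij <;> first
      | (subst hi; subst hj; rfl)
      | exact absurd hij.symm (ha _)
      | exact absurd hij (ha _)
      | exact hinj hij
  have key := hopt v hvinj
  -- rewrite both sides with telescoping
  have hμ : ∀ (w : Fin n → ι),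
      (∑ m, φ m * ∑ i, θ (w i) m * ∏ s ∈ Finset.Iio i, (1 - θ (w s) m))
        = ∑ m, φ m * (1 - ∏ i, (1 - θ (w i) m)) := by
    intro w
    refine Finset.sum_congr rfl fun m _ => ?_
    rw [tele n (fun i => θ (w i) m)]
  rw [hμ u, hμ v] at key
  -- strict inequality the other way
  have hprod : ∀ m, (∏ i, (1 - θ (v i) m)) ≤ ∏ i, (1 - θ (u i) m) := by
    intro m
    rw [← Finset.mul_prod_erase univ _ (mem_univ i0),
        ← Finset.mul_prod_erase univ (fun i => (1 - θ (u i) m)) (mem_univ i0)]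
    have hrest : ∏ i ∈ univ.erase i0, (1 - θ (v i) m)
        = ∏ i ∈ univ.erase i0, (1 - θ (u i) m) := by
      refine Finset.prod_congr rfl fun i hi => ?_
      have : i ≠ i0 := (Finset.mem_erase.mp hi).1
      simp [hv, this]
    rw [hrest]
    have hvpos : (0:ℝ) < ∏ i ∈ univ.erase i0, (1 - θ (u i) m) :=
      Finset.prod_pos fun i _ => by linarith [hθ1 (u i) m]
    have hfac : (1 - θ (v i0) m) ≤ (1 - θ (u i0) m) := by
      simp only [hv, if_pos rfl, hb]
      by_cases hm : m = h a
      · subst hm; rw [hhb] at hθab; linarith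
      · rw [hθtopic a m hm, hθtopic b m (by rw [hhb]; exact hm)]
    exact mul_le_mul_of_nonneg_right hfac (le_of_lt hvpos)
  have hprodstrict : (∏ i, (1 - θ (v i) (h a))) < ∏ i, (1 - θ (u i) (h a)) := by
    rw [← Finset.mul_prod_erase univ _ (mem_univ i0),
        ← Finset.mul_prod_erase univ (fun i => (1 - θ (u i) (h a))) (mem_univ i0)]
    have hrest : ∏ i ∈ univ.erase i0, (1 - θ (v i) (h a))
        = ∏ i ∈ univ.erase i0, (1 - θ (u i) (h a)) := by
      refine Finset.prod_congr rfl fun i hi => ?_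
      have : i ≠ i0 := (Finset.mem_erase.mp hi).1
      simp [hv, this]
    rw [hrest]
    have hvpos : (0:ℝ) < ∏ i ∈ univ.erase i0, (1 - θ (u i) (h a)) :=
      Finset.prod_pos fun i _ => by linarith [hθ1 (u i) (h a)]
    have hfac : (1 - θ (v i0) (h a)) < (1 - θ (u i0) (h a)) := by
      simp only [hv, if_pos rfl, hb]
      rw [hhb] at hθab; linarith
    exact mul_lt_mul_of_pos_right hfac hvpos
  have hstrict : (∑ m, φ m * (1 - ∏ i, (1 - θ (u i) m)))
      < ∑ m, φ m * (1 - ∏ i, (1 - θ (v i) m)) := by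
    refine Finset.sum_lt_sum (fun m _ => ?_) ⟨h a, mem_univ _, ?_⟩
    · have := hprod m
      nlinarith [hφ m]
    · have := hprodstrict
      nlinarith [hφ (h a)]
  linarith

theorem no_same_topic_swap_between_consecutive_optima {M ι : Type*} [Fintype M] [Fintype ι]
    (φ : M → ℝ) (θ : ι → M → ℝ) (h : ι → M)
    (hθtopic : ∀ a m, m ≠ h a → θ a m = 0)
    (hφ : ∀ m, 0 < φ m) (hθ0 : ∀ a m, 0 ≤ θ a m) (hθ1 : ∀ a m, θ a m < 1)
    (hdistinct : ∀ a b : ι, a ≠ b → h a = h b → θ a (h a) ≠ θ b (h b))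
    (l : ℕ)
    (u1 : Fin l → ι) (hinj1 : Function.Injective u1)
    (u2 : Fin (l + 1) → ι) (hinj2 : Function.Injective u2)
    (hopt1 : ∀ v : Fin l → ι, Function.Injective v →
      (∑ m, φ m * ∑ i, θ (v i) m * ∏ s ∈ Finset.Iio i, (1 - θ (v s) m))
        ≤ ∑ m, φ m * ∑ i, θ (u1 i) m * ∏ s ∈ Finset.Iio i, (1 - θ (u1 s) m))
    (hopt2 : ∀ v : Fin (l + 1) → ι, Function.Injective v →
      (∑ m, φ m * ∑ i, θ (v i) m * ∏ s ∈ Finset.Iio i, (1 - θ (v s) m))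
        ≤ ∑ m, φ m * ∑ i, θ (u2 i) m * ∏ s ∈ Finset.Iio i, (1 - θ (u2 s) m))
    (k k' : ι) (hkk' : k ≠ k') (htopic : h k' = h k)
    (hk : (∃ i, u1 i = k) ∧ (∀ i, u2 i ≠ k)) :
    ¬ ((∃ i, u2 i = k') ∧ (∀ i, u1 i ≠ k')) := by
  rintro ⟨⟨i2, hi2⟩, hk'1⟩
  obtain ⟨⟨i1, hi1⟩, hk2⟩ := hk
  rcases lt_trichotomy (θ k (h k)) (θ k' (h k')) with hlt | heq | hgt
  · -- θ k < θ k' : swap k for k' in u1 improves u1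
    exact swap_improves φ θ h hθtopic hφ hθ1 u1 hinj1 k' k
      htopic.symm hlt i1 hi1 hk'1 hopt1
  · exact hdistinct k k' hkk' htopic.symm heq
  · -- θ k' < θ k : swap k' for k in u2 improves u2
    exact swap_improves φ θ h hθtopic hφ hθ1 u2 hinj2 k k'
      htopic hgt i2 hi2 hk2 hopt2
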